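/- Let F : [0,∞) → c₀ be defined by F(t) := (4n²t²/(t²+n²)²)_{n∈ℕ}, where c₀ is the Banach space of scalar sequences converging to zero equipped with the sup-norm. Then the range F([0,∞)) is not relatively compact in c₀, i.e., the closure of {F(t) : t ≥ 0} in c₀ is not compact. -/

import Mathlib

lemma dist_apply_le_dist' (f g : ZeroAtInftyContinuousMap ℕ ℝ) (n : ℕ) :
    dist (f n) (g n) ≤ dist f g := by
  rw [← ZeroAtInftyContinuousMap.dist_toBCF_eq_dist]
  exact BoundedContinuousFunction.dist_coe_le_dist (f := f.toBCF) (g := g.toBCF) n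

/-- **Example (pier), non-compactness of the range.** For `F : [0,∞) → c₀` defined by
`F(t) = (4n²t²/(t²+n²)²)_{n ≥ 1}`, the range `F([0,∞))` is not relatively compact in `c₀`,
i.e. the closure of `{F(t) : t ≥ 0}` is not compact. (The sequence is indexed by `n ≥ 1`,
encoded as `n + 1` for `n : ℕ`.) -/
theorem stmt_5 (F : ℝ → ZeroAtInftyContinuousMap ℕ ℝ)
    (hF : ∀ t : ℝ, 0 ≤ t → ∀ n : ℕ,
      F t n = 4 * ((n : ℝ) + 1) ^ 2 * t ^ 2 / (t ^ 2 + ((n : ℝ) + 1) ^ 2) ^ 2) :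
    ¬ IsCompact (closure (F '' Set.Ici (0 : ℝ))) := by
  intro hcomp
  -- key separation
  have sep : ∀ j k : ℕ, j < k →
      (9 : ℝ) / 25 ≤ dist (F ((2:ℝ) ^ k)) (F ((2:ℝ) ^ j)) := by
    intro j k hjk
    set n : ℕ := 2 ^ k - 1 with hn
    have hpos : 0 < 2 ^ k := Nat.pow_pos (by norm_num)
    have hn1 : n + 1 = 2 ^ k := Nat.succ_pred_eq_of_pos hpos
    have hcast : ((n : ℝ) + 1) = (2 : ℝ) ^ k := by
      have := congrArg (fun m : ℕ => (m : ℝ)) hn1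
      push_cast at this
      linarith
    set a : ℝ := (2 : ℝ) ^ k with ha
    set b : ℝ := (2 : ℝ) ^ j with hb
    have hb0 : 0 < b := by positivity
    have ha0 : 0 < a := by positivity
    have hab : 2 * b ≤ a := by
      have : (2:ℝ) ^ (j + 1) ≤ 2 ^ k := by
        apply pow_le_pow_right₀ (by norm_num) (by omega)
      rw [pow_succ] at this
      linarith
    have h1 : F a n = 1 := by
      rw [hF a (le_of_lt ha0) n, hcast]
      field_simp
      ring
    have h2 : F b n = 4 * a ^ 2 * b ^ 2 / (b ^ 2 + a ^ 2) ^ 2 := by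
      rw [hF b (le_of_lt hb0) n, hcast]
    have hv0 : 0 ≤ F b n := by rw [h2]; positivity
    have hvle : F b n ≤ 16 / 25 := by
      rw [h2, div_le_iff₀ (by positivity)]
      nlinarith [mul_nonneg (by nlinarith : (0:ℝ) ≤ a ^ 2 - 4 * b ^ 2)
        (by nlinarith : (0:ℝ) ≤ 4 * a ^ 2 - b ^ 2)]
    calc (9 : ℝ) / 25 ≤ dist (F a n) (F b n) := by
          rw [Real.dist_eq, h1]
          rw [abs_of_nonneg (by linarith)]
          linarith
      _ ≤ dist (F a) (F b) := dist_apply_le_dist' _ _ n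
  -- sequence in the closure
  set u : ℕ → ZeroAtInftyContinuousMap ℕ ℝ := fun k => F ((2:ℝ) ^ k) with hu
  have hmem : ∀ k, u k ∈ closure (F '' Set.Ici (0 : ℝ)) := fun k =>
    subset_closure ⟨(2:ℝ) ^ k, Set.mem_Ici.mpr (by positivity), rfl⟩
  obtain ⟨x, -, φ, hφ, hlim⟩ := hcomp.isSeqCompact hmem
  have hc : CauchySeq (u ∘ φ) := hlim.cauchySeq
  rw [Metric.cauchySeq_iff'] at hc
  obtain ⟨N, hN⟩ := hc (9 / 25) (by norm_num)
  have := hN (N + 1) (by omega)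
  have hsep := sep (φ N) (φ (N + 1)) (hφ (by omega))
  simp only [Function.comp_apply, hu] at this
  linarith [this, hsep, @dist_nonneg _ _ (u (φ (N+1))) (u (φ N))]
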